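/- For every tensor M ∈ ℝ^{n₁×⋯×n_K}, the dual norm of the overlapped trace norm satisfies ‖M‖_{overlap*} ≤ min_{1≤k≤K} ‖M_(k)‖_op, where M_(k) is the mode-k unfolding of M and ‖·‖_op is the matrix operator (spectral) norm. -/

import Mathlib

open MeasureTheory ProbabilityTheory Real BigOperators

noncomputable section

/-- Entrywise inner product of two tensors (functions). -/
def tinner {ι : Type*} [Fintype ι] (W M : ι → ℝ) : ℝ := ∑ i, W i * M i

/-- Frobenius (entrywise ℓ²) norm of a tensor. -/
def frobNorm {ι : Type*} [Fintype ι] (W : ι → ℝ) : ℝ := Real.sqrt (∑ i, (W i) ^ 2)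

/-- Trace norm (nuclear norm) of a real matrix: the sum of its singular values,
realized as the sum of square roots of the eigenvalues of `Aᴴ * A`. -/
def traceNorm {p q : Type*} [Fintype p] [Fintype q] [DecidableEq q]
    (A : Matrix p q ℝ) : ℝ :=
  ∑ j, Real.sqrt ((Matrix.isHermitian_conjTranspose_mul_self A).eigenvalues j)

/-- Operator (spectral) norm of a real matrix. -/
def opNorm {p q : Type*} [Fintype p] [Fintype q] [DecidableEq q]
    (A : Matrix p q ℝ) : ℝ :=
  ‖LinearMap.toContinuousLinearMap (Matrix.toEuclideanLin A)‖

/-- Mode-`k` unfolding of a `K`-way tensor: rows are indexed by the mode-`k` index and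
columns by the remaining indices. -/
def modeUnfold {K : ℕ} {n : Fin K → ℕ} (W : ((k : Fin K) → Fin (n k)) → ℝ) (k : Fin K) :
    Matrix (Fin (n k)) ((j : {j : Fin K // j ≠ k}) → Fin (n j.1)) ℝ :=
  Matrix.of fun a b =>
    W fun j => if h : j = k then Fin.cast (congrArg n h).symm a else b ⟨j, h⟩

/-- Overlapped trace norm: `‖W‖_overlap = Σ_k ‖W_(k)‖_tr`. -/
def overlapNorm {K : ℕ} {n : Fin K → ℕ} (W : ((k : Fin K) → Fin (n k)) → ℝ) : ℝ :=
  ∑ k, traceNorm (modeUnfold W k)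

/-- Scaled overlapped trace norm: `‖W‖_soverlap = Σ_k (1/√n_k)·‖W_(k)‖_tr`. -/
def soverlapNorm {K : ℕ} {n : Fin K → ℕ} (W : ((k : Fin K) → Fin (n k)) → ℝ) : ℝ :=
  ∑ k, (1 / Real.sqrt (n k)) * traceNorm (modeUnfold W k)

/-- Latent trace norm: infimum of `Σ_k ‖W^(k)_(k)‖_tr` over decompositions `W = Σ_k W^(k)`. -/
def latentNorm {K : ℕ} {n : Fin K → ℕ} (W : ((k : Fin K) → Fin (n k)) → ℝ) : ℝ :=
  sInf {x | ∃ Ws : Fin K → ((k : Fin K) → Fin (n k)) → ℝ,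
    (∑ k, Ws k) = W ∧ x = ∑ k, traceNorm (modeUnfold (Ws k) k)}

/-- Scaled latent trace norm: infimum of `Σ_k (1/√n_k)·‖W^(k)_(k)‖_tr` over decompositions
`W = Σ_k W^(k)`. -/
def scaledLatentNorm {K : ℕ} {n : Fin K → ℕ} (W : ((k : Fin K) → Fin (n k)) → ℝ) : ℝ :=
  sInf {x | ∃ Ws : Fin K → ((k : Fin K) → Fin (n k)) → ℝ,
    (∑ k, Ws k) = W ∧ x = ∑ k, (1 / Real.sqrt (n k)) * traceNorm (modeUnfold (Ws k) k)}

/-- Dual norm of a norm `nrm` on tensors: `‖M‖_* = sup {⟨W,M⟩ : nrm W ≤ 1}`. -/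
def dualNorm {ι : Type*} [Fintype ι] (nrm : (ι → ℝ) → ℝ) (M : ι → ℝ) : ℝ :=
  sSup {x | ∃ W, nrm W ≤ 1 ∧ x = tinner W M}

/-- The Rademacher distribution on `ℝ`: uniform on `{-1, 1}`. -/
def radem : Measure ℝ := (2 : ENNReal)⁻¹ • Measure.dirac (-1) + (2 : ENNReal)⁻¹ • Measure.dirac 1

/-- Expected risk `R(W) = E_{(X,y)∼μ} l(⟨W,X⟩, y)`. -/
def expRisk {ι Y : Type*} [Fintype ι] [MeasurableSpace Y]
    (μ : Measure ((ι → ℝ) × Y)) (l : ℝ → Y → ℝ) (W : ι → ℝ) : ℝ :=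
  ∫ p, l (tinner W p.1) p.2 ∂μ

/-- Empirical risk `R̂(W) = (1/m) Σ_i l(⟨W,X_i⟩, y_i)`. -/
def empRisk {ι Y : Type*} [Fintype ι] {m : ℕ}
    (l : ℝ → Y → ℝ) (X : Fin m → ι → ℝ) (y : Fin m → Y) (W : ι → ℝ) : ℝ :=
  (1 / (m : ℝ)) * ∑ i, l (tinner W (X i)) (y i)

end


noncomputable section Aux

open Matrix in
/-- Matrix Hölder: Frobenius inner product is bounded by trace norm times operator norm. -/
lemma frob_inner_le_traceNorm_mul_opNorm {p q : Type*} [Fintype p] [Fintype q] [DecidableEq q]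
    (A B : Matrix p q ℝ) :
    ∑ a, ∑ b, A a b * B a b ≤ traceNorm A * opNorm B := by
  classical
  have hH := Matrix.isHermitian_conjTranspose_mul_self A
  set v := hH.eigenvectorBasis with hv
  -- completeness relation
  have horth : ∀ b c : q, (∑ j, (v j : EuclideanSpace ℝ q) b * (v j : EuclideanSpace ℝ q) c)
      = if b = c then (1:ℝ) else 0 := by
    intro b c
    have h := v.sum_inner_mul_inner (EuclideanSpace.single b (1:ℝ)) (EuclideanSpace.single c 1)
    simp only [EuclideanSpace.inner_single_left, EuclideanSpace.inner_single_right,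
      starRingEnd_apply, star_trivial, one_mul, mul_one, EuclideanSpace.single_apply] at h
    rw [h]
    simp [eq_comm]
  have hAeq : ∀ j : q, ∑ a, ((A *ᵥ (v j : EuclideanSpace ℝ q)) a) ^ 2 = hH.eigenvalues j := by
    intro j
    have hev : (Aᴴ * A) *ᵥ (v j : EuclideanSpace ℝ q) = hH.eigenvalues j • (v j : EuclideanSpace ℝ q) :=
      hH.mulVec_eigenvectorBasis j
    have hunit : (∑ b, ((v j : EuclideanSpace ℝ q) b) ^ 2) = 1 := by
      have h1 : ‖v j‖ = 1 := v.orthonormal.1 j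
      rw [EuclideanSpace.norm_eq] at h1
      have := congrArg (fun t : ℝ => t ^ 2) h1
      simp only [Real.sq_sqrt (Finset.sum_nonneg fun _ _ => sq_nonneg _), one_pow] at this
      · rw [← this]
        congr 1
        ext b
        rw [Real.norm_eq_abs, sq_abs]
    have key : (A *ᵥ (v j : EuclideanSpace ℝ q)) ⬝ᵥ (A *ᵥ (v j : EuclideanSpace ℝ q))
        = hH.eigenvalues j := by
      have h1 : (A *ᵥ (v j : EuclideanSpace ℝ q)) ⬝ᵥ (A *ᵥ (v j : EuclideanSpace ℝ q))
          = (v j : EuclideanSpace ℝ q) ⬝ᵥ ((Aᴴ * A) *ᵥ (v j : EuclideanSpace ℝ q)) := by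
        have hAT : Aᴴ = Aᵀ := by
          ext a b; simp [Matrix.conjTranspose_apply, Matrix.transpose_apply]
        rw [hAT, ← Matrix.mulVec_mulVec]
        conv_rhs => rw [Matrix.dotProduct_mulVec, Matrix.vecMul_transpose]
      rw [h1, hev, dotProduct_smul]
      have : (v j : EuclideanSpace ℝ q) ⬝ᵥ (v j : EuclideanSpace ℝ q) = 1 := by
        rw [dotProduct]
        simpa [pow_two] using hunit
      rw [this]
      simp
    rw [← key, dotProduct]
    congr 1
    ext a
    ring
  -- rewrite the Frobenius inner product through the eigenbasis
  have hsum : ∑ a, ∑ b, A a b * B a b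
      = ∑ j, ∑ a, (A *ᵥ (v j : EuclideanSpace ℝ q)) a * (B *ᵥ (v j : EuclideanSpace ℝ q)) a := by
    have expand : ∀ j a, (A *ᵥ (v j : EuclideanSpace ℝ q)) a * (B *ᵥ (v j : EuclideanSpace ℝ q)) a
        = ∑ b, ∑ c, A a b * B a c * ((v j : EuclideanSpace ℝ q) b * (v j : EuclideanSpace ℝ q) c) := by
      intro j a
      simp only [Matrix.mulVec, dotProduct, Finset.sum_mul_sum]
      exact Finset.sum_congr rfl fun b _ => Finset.sum_congr rfl fun c _ => by ring
    calc ∑ a, ∑ b, A a b * B a b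
        = ∑ a, ∑ b, ∑ c, A a b * B a c * (if b = c then (1:ℝ) else 0) := by
          apply Finset.sum_congr rfl; intro a _
          apply Finset.sum_congr rfl; intro b _
          simp [mul_ite, Finset.sum_ite_eq]
      _ = ∑ a, ∑ b, ∑ c, A a b * B a c * (∑ j, (v j : EuclideanSpace ℝ q) b * (v j : EuclideanSpace ℝ q) c) := by
          apply Finset.sum_congr rfl; intro a _
          apply Finset.sum_congr rfl; intro b _
          apply Finset.sum_congr rfl; intro c _
          rw [horth]
      _ = ∑ a, ∑ b, ∑ c, ∑ j, A a b * B a c * ((v j : EuclideanSpace ℝ q) b * (v j : EuclideanSpace ℝ q) c) := by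
          simp only [Finset.mul_sum]
      _ = ∑ a, ∑ b, ∑ j, ∑ c, A a b * B a c * ((v j : EuclideanSpace ℝ q) b * (v j : EuclideanSpace ℝ q) c) := by
          apply Finset.sum_congr rfl; intro a _
          apply Finset.sum_congr rfl; intro b _
          exact Finset.sum_comm
      _ = ∑ a, ∑ j, ∑ b, ∑ c, A a b * B a c * ((v j : EuclideanSpace ℝ q) b * (v j : EuclideanSpace ℝ q) c) := by
          apply Finset.sum_congr rfl; intro a _
          exact Finset.sum_comm
      _ = ∑ j, ∑ a, ∑ b, ∑ c, A a b * B a c * ((v j : EuclideanSpace ℝ q) b * (v j : EuclideanSpace ℝ q) c) :=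
          Finset.sum_comm
      _ = ∑ j, ∑ a, (A *ᵥ (v j : EuclideanSpace ℝ q)) a * (B *ᵥ (v j : EuclideanSpace ℝ q)) a := by
          apply Finset.sum_congr rfl; intro j _
          apply Finset.sum_congr rfl; intro a _
          rw [expand]
  rw [hsum, traceNorm, Finset.sum_mul]
  apply Finset.sum_le_sum
  intro j _
  -- each term bounded via Cauchy-Schwarz and operator norm
  have hnormA : ‖Matrix.toEuclideanLin A (v j)‖ = Real.sqrt (hH.eigenvalues j) := by
    rw [EuclideanSpace.norm_eq]
    congr 1
    rw [← hAeq j]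
    apply Finset.sum_congr rfl
    intro a _
    rw [Real.norm_eq_abs, sq_abs]
    rfl
  have hnormB : ‖Matrix.toEuclideanLin B (v j)‖ ≤ opNorm B := by
    have h := (LinearMap.toContinuousLinearMap (Matrix.toEuclideanLin B)).le_opNorm (v j)
    simp only [LinearMap.coe_toContinuousLinearMap', v.orthonormal.1 j, mul_one] at h
    exact h
  have hinner : ∑ a, (A *ᵥ (v j : EuclideanSpace ℝ q)) a * (B *ᵥ (v j : EuclideanSpace ℝ q)) a
      = inner ℝ (Matrix.toEuclideanLin A (v j)) (Matrix.toEuclideanLin B (v j)) := by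
    rw [PiLp.inner_apply]
    simp only [RCLike.inner_apply, conj_trivial]
    exact Finset.sum_congr rfl fun _ _ => mul_comm _ _
  rw [hinner]
  calc inner ℝ (Matrix.toEuclideanLin A (v j)) (Matrix.toEuclideanLin B (v j))
      ≤ ‖Matrix.toEuclideanLin A (v j)‖ * ‖Matrix.toEuclideanLin B (v j)‖ := real_inner_le_norm _ _
    _ ≤ Real.sqrt (hH.eigenvalues j) * opNorm B := by
        rw [hnormA]
        exact mul_le_mul_of_nonneg_left hnormB (Real.sqrt_nonneg _)

/-- The tensor inner product is the Frobenius inner product of any pair of unfoldings. -/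
lemma tinner_eq_unfold_sum {K : ℕ} {n : Fin K → ℕ}
    (W M : ((k : Fin K) → Fin (n k)) → ℝ) (k : Fin K) :
    tinner W M = ∑ a, ∑ b, modeUnfold W k a b * modeUnfold M k a b := by
  classical
  let e : (Fin (n k) × ((j : {j : Fin K // j ≠ k}) → Fin (n j.1))) ≃ ((j : Fin K) → Fin (n j)) :=
    { toFun := fun p j => if h : j = k then Fin.cast (congrArg n h).symm p.1 else p.2 ⟨j, h⟩
      invFun := fun i => (i k, fun j => i j.1)
      left_inv := by
        rintro ⟨a, b⟩
        ext
        · simp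
        · rename_i j
          simp [dif_neg j.2]
      right_inv := by
        intro i
        funext j
        by_cases h : j = k
        · subst h; simp
        · simp [dif_neg h] }
  have hW : ∀ p, modeUnfold W k p.1 p.2 = W (e p) := fun _ => rfl
  have hM : ∀ p, modeUnfold M k p.1 p.2 = M (e p) := fun _ => rfl
  rw [tinner, ← Equiv.sum_comp e (fun i => W i * M i), Fintype.sum_prod_type]
  rfl

lemma traceNorm_nonneg {p q : Type*} [Fintype p] [Fintype q] [DecidableEq q]
    (A : Matrix p q ℝ) : 0 ≤ traceNorm A :=
  Finset.sum_nonneg fun _ _ => Real.sqrt_nonneg _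

end Aux

/-- For every tensor `M ∈ ℝ^{n₁×⋯×n_K}`, the dual norm of the overlapped trace
norm satisfies `‖M‖_{overlap*} ≤ min_k ‖M_(k)‖_op`. -/
theorem dualNorm_overlap_le_min_opNorm
    {K : ℕ} (hK : 0 < K) {n : Fin K → ℕ}
    (M : ((k : Fin K) → Fin (n k)) → ℝ) :
    dualNorm overlapNorm M
      ≤ Finset.univ.inf' ⟨⟨0, hK⟩, Finset.mem_univ _⟩
          (fun k => opNorm (modeUnfold M k)) := by
  classical
  have hinf_nonneg : (0:ℝ) ≤ Finset.univ.inf' ⟨⟨0, hK⟩, Finset.mem_univ _⟩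
      (fun k => opNorm (modeUnfold M k)) :=
    Finset.le_inf' _ _ fun k _ => norm_nonneg _
  apply Real.sSup_le _ hinf_nonneg
  rintro x ⟨W, hW, rfl⟩
  apply Finset.le_inf'
  intro k _
  have htr : traceNorm (modeUnfold W k) ≤ 1 := by
    refine le_trans ?_ hW
    rw [overlapNorm]
    exact Finset.single_le_sum (fun j _ => traceNorm_nonneg _) (Finset.mem_univ k)
  calc tinner W M
      = ∑ a, ∑ b, modeUnfold W k a b * modeUnfold M k a b := tinner_eq_unfold_sum W M k
    _ ≤ traceNorm (modeUnfold W k) * opNorm (modeUnfold M k) :=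
        frob_inner_le_traceNorm_mul_opNorm _ _
    _ ≤ 1 * opNorm (modeUnfold M k) :=
        mul_le_mul_of_nonneg_right htr (norm_nonneg _)
    _ = opNorm (modeUnfold M k) := one_mul _
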